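/- Let Z act on Z₂ trivially (translation group p1 in one dimension, generated by T), let G_int be a group, and let η : G_int × G_int → Z₂ be a 2-cocycle. Then Ω(g_1,g_2,g_3) = exp(iπ x_1 η(a_2,a_3)), where g_i = (T^{x_i}, a_i) ∈ Z × G_int, is a U(1)-valued 3-cocycle on Z × G_int. Moreover, if η is not a coboundary (as a Z₂-valued cocycle), then Ω represents a nontrivial class in H³(Z × G_int, U(1)) whenever exp(iπη) is nontrivial in H²(G_int, U(1)). -/

import Mathlib

/-- `exp(iπ·) : Z₂ → U(1)`, with `U(1) = ℝ/ℤ` (so `exp(iπ k) ↦ k/2 mod ℤ`). -/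
noncomputable def expIPi (z : ZMod 2) : AddCircle (1 : ℝ) :=
  (((z.val : ℝ) / 2 : ℝ) : AddCircle (1 : ℝ))

/-- The 3-cochain `Ω(g₁,g₂,g₃) = exp(iπ x₁ η(a₂,a₃))` on `ℤ × G_int` (translations written
multiplicatively), where `gᵢ = (T^{xᵢ}, aᵢ)`. -/
noncomputable def OmegaLSM {Gi : Type*} [Group Gi] (eta : Gi → Gi → ZMod 2)
    (g1 g2 g3 : Multiplicative ℤ × Gi) : AddCircle (1 : ℝ) :=
  expIPi (((Multiplicative.toAdd g1.1 : ℤ) : ZMod 2) * eta g2.2 g3.2)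

lemma expIPi_zero : expIPi 0 = 0 := by
  simp [expIPi]

lemma expIPi_add (z w : ZMod 2) : expIPi (z + w) = expIPi z + expIPi w := by
  have h : ∀ u : ZMod 2, u = 0 ∨ u = 1 := by decide
  have hone : ((1:ℝ) : AddCircle (1:ℝ)) = 0 := AddCircle.coe_period (p := (1:ℝ))
  have hhalf : expIPi 1 = (((1:ℝ)/2 : ℝ) : AddCircle (1:ℝ)) := by
    norm_num [expIPi, ZMod.val_one]
  rcases h z with rfl | rfl <;> rcases h w with rfl | rfl
  · simp [expIPi]
  · simp [expIPi]
  · simp [expIPi]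
  · rw [show (1 + 1 : ZMod 2) = 0 from by decide, expIPi_zero, hhalf,
      show ((((1:ℝ)/2 : ℝ) : AddCircle (1:ℝ)) + (((1:ℝ)/2 : ℝ) : AddCircle (1:ℝ)))
        = ((((1:ℝ)/2 + (1:ℝ)/2 : ℝ)) : AddCircle (1:ℝ)) from rfl,
      show ((1:ℝ)/2 + (1:ℝ)/2 : ℝ) = 1 from by norm_num, hone]

/-- `expIPi` as an additive homomorphism. -/
noncomputable def expIPiHom : ZMod 2 →+ AddCircle (1 : ℝ) :=
  AddMonoidHom.mk' expIPi expIPi_add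

lemma expIPi_eq_hom (z : ZMod 2) : expIPi z = expIPiHom z := rfl

/-- for the 1D translation group `p1 = ℤ` (generated by `T`) and any group
`G_int` with a `Z₂`-valued 2-cocycle `η`, the function
`Ω(g₁,g₂,g₃) = exp(iπ x₁ η(a₂,a₃))` is a `U(1)`-valued 3-cocycle on `ℤ × G_int`.
Moreover, if `η` is not a `Z₂`-coboundary and `exp(iπη)` is nontrivial in
`H²(G_int, U(1))`, then `Ω` represents a nontrivial class in `H³(ℤ × G_int, U(1))`,
i.e. it is not a `U(1)`-coboundary. -/
theorem omegaLSM_cocycle_and_nontrivial {Gi : Type*} [Group Gi]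
    (eta : Gi → Gi → ZMod 2)
    (heta : ∀ a b c : Gi, eta b c + eta (a * b) c + eta a (b * c) + eta a b = 0) :
    (∀ g1 g2 g3 g4 : Multiplicative ℤ × Gi,
      OmegaLSM eta g2 g3 g4 - OmegaLSM eta (g1 * g2) g3 g4 + OmegaLSM eta g1 (g2 * g3) g4
        - OmegaLSM eta g1 g2 (g3 * g4) + OmegaLSM eta g1 g2 g3 = 0) ∧
    ((¬ ∃ ν : Gi → ZMod 2, ∀ a b : Gi, eta a b = ν a + ν b + ν (a * b)) →
      (¬ ∃ ν : Gi → AddCircle (1 : ℝ), ∀ a b : Gi,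
          expIPi (eta a b) = ν b - ν (a * b) + ν a) →
      ¬ ∃ μ : (Multiplicative ℤ × Gi) → (Multiplicative ℤ × Gi) → AddCircle (1 : ℝ),
          ∀ g1 g2 g3 : Multiplicative ℤ × Gi,
            OmegaLSM eta g1 g2 g3 = μ g2 g3 - μ (g1 * g2) g3 + μ g1 (g2 * g3) - μ g1 g2) := by
  constructor
  · -- the 3-cocycle condition
    intro g1 g2 g3 g4
    simp only [OmegaLSM, Prod.fst_mul, Prod.snd_mul, toAdd_mul, Int.cast_add, expIPi_eq_hom,
      ← map_sub, ← map_add]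
    rw [show ((Multiplicative.toAdd g2.1 : ℤ) : ZMod 2) * eta g3.2 g4.2
        - (((Multiplicative.toAdd g1.1 : ℤ) : ZMod 2)
            + ((Multiplicative.toAdd g2.1 : ℤ) : ZMod 2)) * eta g3.2 g4.2
        + ((Multiplicative.toAdd g1.1 : ℤ) : ZMod 2) * eta (g2.2 * g3.2) g4.2
        - ((Multiplicative.toAdd g1.1 : ℤ) : ZMod 2) * eta g2.2 (g3.2 * g4.2)
        + ((Multiplicative.toAdd g1.1 : ℤ) : ZMod 2) * eta g2.2 g3.2 = 0 from ?_]
    · exact map_zero _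
    · have h2 : (2 : ZMod 2) = 0 := by decide
      linear_combination ((Multiplicative.toAdd g1.1 : ℤ) : ZMod 2) * heta g2.2 g3.2 g4.2
        - (((Multiplicative.toAdd g1.1 : ℤ) : ZMod 2) * eta g3.2 g4.2
          + ((Multiplicative.toAdd g1.1 : ℤ) : ZMod 2) * eta g2.2 (g3.2 * g4.2)) * h2
  · -- nontriviality
    intro _hZ2 hU1
    rintro ⟨μ, hμ⟩
    apply hU1
    refine ⟨fun a => μ (1, a) (Multiplicative.ofAdd 1, 1) - μ (Multiplicative.ofAdd 1, 1) (1, a),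
      ?_⟩
    intro a b
    have e1 := hμ (Multiplicative.ofAdd 1, 1) (1, a) (1, b)
    have e2 := hμ (1, a) (Multiplicative.ofAdd 1, 1) (1, b)
    have e3 := hμ (1, a) (1, b) (Multiplicative.ofAdd 1, 1)
    simp only [OmegaLSM, Prod.mk_mul_mk, one_mul, mul_one, toAdd_ofAdd, toAdd_one,
      Int.cast_one, Int.cast_zero, zero_mul, expIPi_zero] at e1 e2 e3
    rw [e1]
    rw [← sub_eq_zero] at e2 e3 ⊢
    rw [show (0 : AddCircle (1:ℝ)) =
        -(0 - (μ (Multiplicative.ofAdd 1, 1) (1, b) - μ (Multiplicative.ofAdd 1, a) (1, b)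
          + μ (1, a) (Multiplicative.ofAdd 1, b) - μ (1, a) (Multiplicative.ofAdd 1, 1)))
        + (0 - (μ (1, b) (Multiplicative.ofAdd 1, 1) - μ (1, a * b) (Multiplicative.ofAdd 1, 1)
          + μ (1, a) (Multiplicative.ofAdd 1, b) - μ (1, a) (1, b))) from by
      rw [e2, e3]; abel1]
    beta_reduce; abel
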